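/- Set E := ker d₀⁻¹ ∩ ker(d₀⁻¹ ∘ d) and F := range(d₀⁻¹) + range(d ∘ d₀⁻¹). Then: (a) d maps E into E; (b) d maps F into F; (c) V is the internal direct sum of E and F, i.e. E ∩ F = 0 and E + F = V. (This is part (i) of the main theorem: the complex (V, d) splits into the direct sum of the two subcomplexes (E, d) and (F, d).) -/

import Mathlib

/-- With `E := ker d₀⁻¹ ⊓ ker (d₀⁻¹ ∘ d)` and
`F := range d₀⁻¹ ⊔ range (d ∘ d₀⁻¹)`: `d` maps `E` into `E` and `F` into `F`,
and `V` is the internal direct sum of `E` and `F`. -/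
theorem deRham_splits_into_E_and_F
    {V : Type*} [NormedAddCommGroup V] [InnerProductSpace ℝ V] [FiniteDimensional ℝ V]
    (d₀ dinv : V →ₗ[ℝ] V) (hd₀ : d₀ ∘ₗ d₀ = 0)
    (hpinv₁ : (LinearMap.range d₀)ᗮ ≤ LinearMap.ker dinv)
    (hpinv₂ : LinearMap.range dinv ≤ (LinearMap.ker d₀)ᗮ)
    (hpinv₃ : ∀ v : V, d₀ (dinv v) = (Submodule.orthogonalProjection (LinearMap.range d₀) v : V))
    (d : V →ₗ[ℝ] V) (hd : d ∘ₗ d = 0)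
    (D : V →ₗ[ℝ] V) (hD : D = dinv ∘ₗ (d - d₀))
    (N : ℕ) (hDnil : D ^ (N + 1) = 0)
    (P : V →ₗ[ℝ] V) (hP : P = ∑ k ∈ Finset.range (N + 1), ((-1 : ℝ)) ^ k • D ^ k)
    (Q : V →ₗ[ℝ] V) (hQ : Q = P ∘ₗ dinv)
    (PiE : V →ₗ[ℝ] V) (hPiE : PiE = LinearMap.id - Q ∘ₗ d - d ∘ₗ Q)
    (E F : Submodule ℝ V)
    (hE : E = LinearMap.ker dinv ⊓ LinearMap.ker (dinv ∘ₗ d))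
    (hF : F = LinearMap.range dinv ⊔ LinearMap.range (d ∘ₗ dinv)) :
    (∀ x ∈ E, d x ∈ E) ∧ (∀ x ∈ F, d x ∈ F) ∧ E ⊓ F = ⊥ ∧ E ⊔ F = ⊤ := by
  subst hE hF
  -- convert hypotheses into the endomorphism ring language
  have hdm : d * d = 0 := hd
  have hrk : LinearMap.range d₀ ≤ LinearMap.ker d₀ := by
    rintro x ⟨y, rfl⟩
    simpa [LinearMap.mem_ker] using LinearMap.congr_fun hd₀ y
  -- dinv ∘ d₀ ∘ dinv = dinv
  have hA : dinv * (d₀ * dinv) = dinv := by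
    ext v
    have h1 : v - (Submodule.orthogonalProjection (LinearMap.range d₀) v : V) ∈ (LinearMap.range d₀)ᗮ :=
      Submodule.sub_starProjection_mem_orthogonal (K := LinearMap.range d₀) v
    have h2 := hpinv₁ h1
    rw [LinearMap.mem_ker, map_sub, sub_eq_zero] at h2
    simpa [Module.End.mul_apply, hpinv₃ v] using h2.symm
  have hA' : (dinv * d₀) * dinv = dinv := by rw [mul_assoc]; exact hA
  -- dinv ∘ dinv = 0
  have hB : dinv * dinv = 0 := by
    ext v
    have h1 : dinv v ∈ (LinearMap.ker d₀)ᗮ := hpinv₂ ⟨v, rfl⟩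
    have h2 := hpinv₁ (Submodule.orthogonal_le hrk h1)
    simpa [Module.End.mul_apply] using h2
  have hDm : D = dinv * (d - d₀) := hD
  have hdd : dinv * d = D + dinv * d₀ := by rw [hDm]; noncomm_ring
  have hdinvD : dinv * D = 0 := by
    rw [hDm, ← mul_assoc, hB, zero_mul]
  -- geometric series form of P
  have hPgeom : P = ∑ k ∈ Finset.range (N + 1), (-D) ^ k := by
    rw [hP]
    refine Finset.sum_congr rfl fun k _ => ?_
    rw [← neg_one_smul ℝ D, smul_pow]
  have hneg : (-D) ^ (N + 1) = 0 := by
    rw [neg_pow, hDnil, mul_zero]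
  have hgeom1 : P * (1 + D) = 1 := by
    have h1 : (∑ k ∈ Finset.range (N + 1), (-D) ^ k) * (-D - 1) = -1 := by
      rw [geom_sum_mul, hneg, zero_sub]
    have h2 : -(P * (1 + D)) = -1 := by
      rw [hPgeom, ← h1]; noncomm_ring
    exact neg_inj.mp h2
  have hcD : Commute D P := by
    rw [hPgeom]
    exact Commute.sum_right _ _ _ fun k _ => ((Commute.refl D).neg_right).pow_right k
  have hgeom2 : (1 + D) * P = 1 := by
    rw [((Commute.one_left P).add_left hcD).eq, hgeom1]
  -- P = 1 + (-D) * P₁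
  set P₁ : V →ₗ[ℝ] V := ∑ k ∈ Finset.range N, (-D) ^ k with hP₁
  have hPform : P = (-D) * P₁ + 1 := by rw [hPgeom]; exact geom_sum_succ
  have hQm : Q = P * dinv := hQ
  have hPiEm : PiE = 1 - Q * d - d * Q := hPiE
  -- dinv * P = dinv
  have hdinvP : dinv * P = dinv := by
    rw [hPform, mul_add, mul_one, ← mul_assoc, mul_neg, hdinvD, neg_zero, zero_mul, zero_add]
  have hdinvQ : dinv * Q = 0 := by
    rw [hQm, ← mul_assoc, hdinvP, hB]
  have hQdinv : Q * dinv = 0 := by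
    rw [hQm, mul_assoc, hB, mul_zero]
  -- range of Q
  have hQform : Q = dinv * (1 - (d - d₀) * (P₁ * dinv)) := by
    rw [hQm, hPform, hDm]; noncomm_ring
  have hQrange : ∀ w, Q w ∈ LinearMap.range dinv := by
    intro w
    rw [hQform]
    exact ⟨_, rfl⟩
  -- (dinv * d₀) * Q = Q
  have hπD : (dinv * d₀) * D = D := by
    rw [hDm, ← mul_assoc, hA']
  have hπQ : (dinv * d₀) * Q = Q := by
    have h1 : (dinv * d₀) * Q = ((dinv * d₀) * D) * (-(P₁ * dinv)) + (dinv * d₀) * dinv := by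
      rw [hQm, hPform]; noncomm_ring
    have h2 : Q = D * (-(P₁ * dinv)) + dinv := by
      rw [hQm, hPform]; noncomm_ring
    rw [h1, hπD, hA', ← h2]
  -- dinv * d * Q = dinv
  have hdQ : dinv * d * Q = dinv := by
    have h5 : dinv * d * Q = D * Q + (dinv * d₀) * Q := by rw [hdd, add_mul]
    rw [hπQ] at h5
    have h6 : D * Q + Q = dinv := by
      have : D * Q + Q = ((1 + D) * P) * dinv := by rw [hQm]; noncomm_ring
      rw [this, hgeom2, one_mul]
    rw [h5, h6]
  -- Q * d * dinv = dinv
  have hQddinv : Q * d * dinv = dinv := by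
    have h1 : Q * d * dinv = P * ((dinv * d) * dinv) := by rw [hQm]; noncomm_ring
    have h2 : (dinv * d) * dinv = (1 + D) * dinv := by
      rw [hdd, add_mul, hA', add_mul, one_mul, add_comm]
    rw [h1, h2, ← mul_assoc, hgeom1, one_mul]
  -- projection identities
  have hdinvPiE : dinv * PiE = 0 := by
    have h1 : dinv * PiE = dinv - (dinv * Q) * d - dinv * d * Q := by
      rw [hPiEm]; noncomm_ring
    rw [h1, hdinvQ, hdQ, zero_mul, sub_zero, sub_self]
  have hdinvdPiE : dinv * d * PiE = 0 := by
    have h1 : dinv * d * PiE = dinv * d - (dinv * d * Q) * d - (dinv * (d * d)) * Q := by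
      rw [hPiEm]; noncomm_ring
    rw [h1, hdQ, hdm, mul_zero, zero_mul, sub_zero, sub_self]
  have hPiEdinv : PiE * dinv = 0 := by
    have h1 : PiE * dinv = dinv - Q * d * dinv - d * (Q * dinv) := by
      rw [hPiEm]; noncomm_ring
    rw [h1, hQddinv, hQdinv, mul_zero, sub_zero, sub_self]
  have hPiEd : PiE * d = d * PiE := by
    have h1 : PiE * d = d - Q * (d * d) - d * (Q * d) := by rw [hPiEm]; noncomm_ring
    have h2 : d * PiE = d - d * (Q * d) - (d * d) * Q := by rw [hPiEm]; noncomm_ring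
    rw [h1, h2, hdm, mul_zero, zero_mul, sub_zero, sub_zero]
  have hPiEddinv : PiE * (d * dinv) = 0 := by
    rw [← mul_assoc, hPiEd, mul_assoc, hPiEdinv, mul_zero]
  -- membership of PiE v in E
  have hPiEmemE : ∀ v : V,
      PiE v ∈ LinearMap.ker dinv ⊓ LinearMap.ker (dinv ∘ₗ d) := by
    intro v
    refine Submodule.mem_inf.2 ⟨?_, ?_⟩
    · rw [LinearMap.mem_ker]
      simpa [Module.End.mul_apply] using LinearMap.congr_fun hdinvPiE v
    · rw [LinearMap.mem_ker, LinearMap.comp_apply]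
      simpa [Module.End.mul_apply] using LinearMap.congr_fun hdinvdPiE v
  refine ⟨?_, ?_, ?_, ?_⟩
  · -- d maps E to E
    intro x hx
    obtain ⟨hx1, hx2⟩ := Submodule.mem_inf.1 hx
    rw [LinearMap.mem_ker, LinearMap.comp_apply] at hx2
    refine Submodule.mem_inf.2 ⟨hx2, ?_⟩
    rw [LinearMap.mem_ker, LinearMap.comp_apply]
    have : d (d x) = 0 := by simpa using LinearMap.congr_fun hd x
    rw [this, map_zero]
  · -- d maps F to F
    intro x hx
    obtain ⟨y, hy, z, hz, rfl⟩ := Submodule.mem_sup.1 hx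
    rw [map_add]
    refine Submodule.add_mem _ ?_ ?_
    · obtain ⟨a, rfl⟩ := hy
      exact Submodule.mem_sup_right ⟨a, rfl⟩
    · obtain ⟨b, rfl⟩ := hz
      have : d ((d ∘ₗ dinv) b) = 0 := by
        simpa [LinearMap.comp_apply] using LinearMap.congr_fun hd (dinv b)
      rw [this]
      exact Submodule.zero_mem _
  · -- E ⊓ F = ⊥
    rw [eq_bot_iff]
    rintro x hx
    obtain ⟨hxE, hxF⟩ := Submodule.mem_inf.1 hx
    obtain ⟨hx1, hx2⟩ := Submodule.mem_inf.1 hxE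
    rw [LinearMap.mem_ker] at hx1
    rw [LinearMap.mem_ker, LinearMap.comp_apply] at hx2
    have hQx : Q x = 0 := by rw [hQm, Module.End.mul_apply, hx1, map_zero]
    have hQdx : Q (d x) = 0 := by rw [hQm, Module.End.mul_apply, hx2, map_zero]
    have hfix : PiE x = x := by
      rw [hPiEm]
      simp [Module.End.mul_apply, hQdx, hQx]
    have hzero : PiE x = 0 := by
      obtain ⟨y, hy, z, hz, rfl⟩ := Submodule.mem_sup.1 hxF
      obtain ⟨a, rfl⟩ := hy
      obtain ⟨b, rfl⟩ := hz
      rw [map_add]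
      have h1 : PiE (dinv a) = 0 := by
        simpa [Module.End.mul_apply] using LinearMap.congr_fun hPiEdinv a
      have h2 : PiE ((d ∘ₗ dinv) b) = 0 := by
        simpa [Module.End.mul_apply, LinearMap.comp_apply] using
          LinearMap.congr_fun hPiEddinv b
      rw [h1, h2, add_zero]
    simpa [hzero] using hfix.symm
  · -- E ⊔ F = ⊤
    rw [eq_top_iff]
    intro v _
    have hdecomp : v = PiE v + (Q (d v) + d (Q v)) := by
      rw [hPiEm]
      simp [Module.End.mul_apply]
    rw [hdecomp]
    refine Submodule.add_mem _ (Submodule.mem_sup_left (hPiEmemE v)) (Submodule.mem_sup_right ?_)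
    refine Submodule.add_mem _ (Submodule.mem_sup_left (hQrange (d v))) ?_
    obtain ⟨u, hu⟩ := hQrange v
    exact Submodule.mem_sup_right ⟨u, by simp [LinearMap.comp_apply, hu]⟩
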